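/- Suppose (T;t,σ) is an event-labeled gene tree and N is a multi-arc free network on 𝕊. Then N is a species network for (T;t,σ) (i.e., there exists a TreeNet-reconciliation map from (T;t,σ) to N) if and only if (U*(N),χ*) is a pseudo MUL-tree for (T;t,σ) (i.e., there exists a MUL-reconciliation map from (T;t,σ) to (U*(N),χ*)). -/

import Mathlib

namespace Phylo

/-- A directed multigraph: `tail e` and `head e` give the endpoints of an arc `e`.
    Multi-arcs are allowed since distinct arcs may have the same endpoints. -/
structure MGraph (V : Type) (E : Type) where
  tail : E → V
  head : E → V

namespace MGraph

variable {V E : Type}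

/-- `G.Adj u v` iff there is an arc from `u` to `v`. -/
def Adj (G : MGraph V E) (u v : V) : Prop :=
  ∃ e : E, G.tail e = u ∧ G.head e = v

/-- `G.Reach u v` iff there is a directed path (possibly a single vertex) from `u` to `v`. -/
def Reach (G : MGraph V E) (u v : V) : Prop :=
  Relation.ReflTransGen G.Adj u v

/-- `G.vle v u` means `v ⪯ u` (i.e. `v` is a descendant of `u`). -/
def vle (G : MGraph V E) (v u : V) : Prop := G.Reach u v

/-- `G.vlt v u` means `v ≺ u` (i.e. `v` is strictly below `u`). -/
def vlt (G : MGraph V E) (v u : V) : Prop := G.Reach u v ∧ v ≠ u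

/-- indegree of a vertex -/
noncomputable def inDeg (G : MGraph V E) (v : V) : ℕ :=
  Nat.card {e : E // G.head e = v}

/-- outdegree of a vertex -/
noncomputable def outDeg (G : MGraph V E) (v : V) : ℕ :=
  Nat.card {e : E // G.tail e = v}

/-- `G` is a DAG. -/
def Acyclic (G : MGraph V E) : Prop :=
  ∀ v : V, ¬ Relation.TransGen G.Adj v v

/-- `G` has no multi-arcs. -/
def MultiArcFree (G : MGraph V E) : Prop :=
  ∀ e f : E, G.tail e = G.tail f → G.head e = G.head f → e = f

/-- A point of `V ∪ E`, where an arc is represented by its head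
    (used for extending `Q`-sets to arcs). -/
def hpt (G : MGraph V E) : V ⊕ E → V
  | Sum.inl v => v
  | Sum.inr e => G.head e

/-- A point of `V ∪ E`, where an arc is represented by its tail
    (used for extending `lca` to arcs). -/
def tpt (G : MGraph V E) : V ⊕ E → V
  | Sum.inl v => v
  | Sum.inr e => G.tail e

/-- The strict order `≺` on `V ∪ E`:
    `x ≺ y` for vertices means `x ⪯ y` and `x ≠ y`;
    a vertex `x ≺` an arc `e = (u,v)` iff `x ⪯ v`;
    an arc `e = (u,v) ≺` a vertex `x` iff `u ⪯ x`;
    for arcs `e = (u,v)` and `f = (a,b)`: `e ≺ f` iff `v ≺ u ⪯ b ≺ a`. -/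
def slt (G : MGraph V E) : V ⊕ E → V ⊕ E → Prop
  | Sum.inl x, Sum.inl y => G.vlt x y
  | Sum.inl x, Sum.inr e => G.vle x (G.head e)
  | Sum.inr e, Sum.inl x => G.vle (G.tail e) x
  | Sum.inr e, Sum.inr f =>
      G.vlt (G.head e) (G.tail e) ∧ G.vle (G.tail e) (G.head f) ∧
        G.vlt (G.head f) (G.tail f)

/-- The (non-strict) order `⪯` on `V ∪ E`. -/
def sle (G : MGraph V E) (a b : V ⊕ E) : Prop := a = b ∨ G.slt a b

/-- `Q_N(x,y)`: the set of vertices `z` admitting directed paths from `z` to `x`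
    and from `z` to `y` which are separated by `z`, i.e. start with different
    children of `z`. -/
def QSet (G : MGraph V E) (x y : V) : Set V :=
  {z | ∃ c₁ c₂ : V, c₁ ≠ c₂ ∧ G.Adj z c₁ ∧ G.Adj z c₂ ∧ G.Reach c₁ x ∧ G.Reach c₂ y}

/-- `l` is the least common ancestor of the set `A`:
    a `⪯`-minimal common ancestor of all of `A`. -/
def IsLca (G : MGraph V E) (A : Set V) (l : V) : Prop :=
  (∀ a ∈ A, G.Reach l a) ∧ ∀ l' : V, (∀ a ∈ A, G.Reach l' a) → G.Reach l' l

/-- A directed path, given as its (nonempty, repetition-free) list of vertices. -/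
def IsDiPath (G : MGraph V E) (p : List V) : Prop :=
  p ≠ [] ∧ p.Chain' G.Adj ∧ p.Nodup

end MGraph

/-- Event labels for inner vertices of gene trees: speciation or duplication. -/
inductive Event : Type
  | spec : Event
  | dupl : Event
  deriving DecidableEq

variable {V E W F D U S : Type}

/-- `(G, lv, ρ)` is a (rooted phylogenetic) network with leaf set `lv` and root `ρ`:
    (N1) the root has indegree 0 and outdegree 1 and its unique child has
    indegree 1 and outdegree at least 2;
    (N2) the leaves are exactly the vertices of outdegree 0 and indegree 1;
    (N3) every other non-leaf vertex is a tree vertex (indegree 1, outdegree > 1)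
    or a hybrid vertex (indegree > 1, outdegree 1);
    moreover the leaf set has at least two elements and everything is finite. -/
structure IsNetwork (G : MGraph V E) (lv : Set V) (ρ : V) : Prop where
  finV : Finite V
  finE : Finite E
  acyclic : G.Acyclic
  root_in : G.inDeg ρ = 0
  root_out : G.outDeg ρ = 1
  root_child : ∀ c : V, G.Adj ρ c → G.inDeg c = 1 ∧ 2 ≤ G.outDeg c
  leaf_iff : ∀ v : V, v ∈ lv ↔ (G.outDeg v = 0 ∧ G.inDeg v = 1)
  inner_deg : ∀ v : V, v ∉ lv → v ≠ ρ →
      (G.inDeg v = 1 ∧ 2 ≤ G.outDeg v) ∨ (2 ≤ G.inDeg v ∧ G.outDeg v = 1)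
  two_leaves : ∃ a b : V, a ∈ lv ∧ b ∈ lv ∧ a ≠ b

/-- no hybrid vertices -/
def NoHybrid (G : MGraph V E) : Prop := ∀ v : V, G.inDeg v ≤ 1

/-- A (rooted) phylogenetic tree: a multi-arc free network without hybrid vertices. -/
def IsPhyloTree (G : MGraph V E) (lv : Set V) (ρ : V) : Prop :=
  IsNetwork G lv ρ ∧ G.MultiArcFree ∧ NoHybrid G

/-- A network (or tree) "on 𝕊": its leaves are in bijection with the species set `S`
    via the labeling `sp`. -/
structure IsLeafLabeling (G : MGraph V E) (lv : Set V) (sp : S → V) : Prop where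
  inj : Function.Injective sp
  mem : ∀ s : S, sp s ∈ lv
  surj : ∀ v ∈ lv, ∃ s : S, sp s = v

/-- `(G, lv, ρ, σ)` is the underlying structure of an event-labeled gene tree on the
    gene set `lv`: a reduced tree (root of indegree 0 and outdegree ≥ 2, all other
    inner vertices of indegree 1 and outdegree ≥ 2) together with a surjective
    gene-species map `σ` whose image has more than one element. -/
structure IsGeneTree (G : MGraph V E) (lv : Set V) (ρ : V) (σ : V → S) : Prop where
  finV : Finite V
  finE : Finite E
  acyclic : G.Acyclic
  multiarc_free : G.MultiArcFree
  root_in : G.inDeg ρ = 0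
  root_out : 2 ≤ G.outDeg ρ
  leaf_iff : ∀ v : V, v ∈ lv ↔ (G.outDeg v = 0 ∧ G.inDeg v = 1)
  inner_deg : ∀ v : V, v ∉ lv → v ≠ ρ → G.inDeg v = 1 ∧ 2 ≤ G.outDeg v
  sigma_surj : ∀ s : S, ∃ g ∈ lv, σ g = s
  sigma_nontriv : ∃ g g' : V, g ∈ lv ∧ g' ∈ lv ∧ σ g ≠ σ g'

/-- `L_T(x)`: the set of leaves below or equal to `x`. -/
def leavesBelow (G : MGraph V E) (lv : Set V) (x : V) : Set V :=
  {g | g ∈ lv ∧ G.Reach x g}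

/-- A TreeNet-reconciliation map `μ` from the event-labeled gene tree `(T;t,σ)`
    to the network `N` (with species labeling `sp`):
    (R1) leaves are mapped to the species containing them;
    (R2.i) a speciation vertex is mapped to a vertex of `N` separating the images
    of two of its children (i.e. `μ x ∈ Q²`);
    (R2.ii) a duplication vertex is mapped to an arc of `N`;
    (R3) ancestor relations are preserved (strictly, unless both events are
    duplications). -/
structure IsTreeNetRecon (T : MGraph V E) (lvT : Set V) (t : V → Event) (σ : V → S)
    (N : MGraph W F) (sp : S → W) (μ : V → W ⊕ F) : Prop where
  R1 : ∀ x ∈ lvT, μ x = Sum.inl (sp (σ x))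
  R2i : ∀ x : V, x ∉ lvT → t x = Event.spec →
      ∃ w : W, μ x = Sum.inl w ∧ ∃ c₁ c₂ : V, T.Adj x c₁ ∧ T.Adj x c₂ ∧
        w ∈ N.QSet (N.hpt (μ c₁)) (N.hpt (μ c₂))
  R2ii : ∀ x : V, x ∉ lvT → t x = Event.dupl → ∃ e : F, μ x = Sum.inr e
  R3d : ∀ x y : V, T.vlt x y → x ∉ lvT → y ∉ lvT →
      t x = Event.dupl → t y = Event.dupl → N.sle (μ x) (μ y)
  R3s : ∀ x y : V, T.vlt x y →
      ¬ (x ∉ lvT ∧ y ∉ lvT ∧ t x = Event.dupl ∧ t y = Event.dupl) →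
      N.slt (μ x) (μ y)

/-- `(M, lv, ρ, χ)` is a pseudo MUL-tree on the species set `S`:
    a rooted tree (possibly with indegree-1 outdegree-1 vertices) whose root has
    indegree 0 and outdegree 1, together with a labeling `χ` of the leaves by `S`
    with pairwise disjoint nonempty classes covering all leaves. -/
structure IsPMULTree (M : MGraph D U) (lv : Set D) (ρ : D) (χ : S → Set D) : Prop where
  finD : Finite D
  finU : Finite U
  acyclic : M.Acyclic
  root_in : M.inDeg ρ = 0
  root_out : M.outDeg ρ = 1
  leaf_iff : ∀ v : D, v ∈ lv ↔ (M.outDeg v = 0 ∧ M.inDeg v = 1)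
  inner_deg : ∀ v : D, v ∉ lv → v ≠ ρ → M.inDeg v = 1 ∧ 1 ≤ M.outDeg v
  chi_sub : ∀ x : S, χ x ⊆ lv
  chi_ne : ∀ x : S, (χ x).Nonempty
  chi_disj : ∀ x y : S, x ≠ y → Disjoint (χ x) (χ y)
  chi_cover : ∀ l ∈ lv, ∃ x : S, l ∈ χ x
  species_nontriv : ∃ x y : S, x ≠ y

/-- A MUL-tree is a pseudo MUL-tree whose underlying tree is a phylogenetic tree,
    i.e., without indegree-1 outdegree-1 vertices. -/
def IsMULTree (M : MGraph D U) (lv : Set D) (ρ : D) (χ : S → Set D) : Prop :=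
  IsPMULTree M lv ρ χ ∧ ∀ v : D, v ∉ lv → v ≠ ρ → 2 ≤ M.outDeg v

/-- `D¹`: the set of vertices with indegree one and outdegree one. -/
def D1set (M : MGraph D U) : Set D := {v | M.inDeg v = 1 ∧ M.outDeg v = 1}

/-- A MUL-reconciliation map `κ : V → (D∖D¹) ∪ U` from the event-labeled gene tree
    `(T;t,σ)` to the pseudo MUL-tree `(M,χ)`:
    (M1) each leaf maps to a leaf of `M` labeled by its species;
    (M2.i) a speciation vertex maps to an inner vertex of `M` admitting directed
    paths to the images of two distinct children whose first arcs are incomparable;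
    (M2.ii) a duplication vertex maps to an arc;
    (M3) ancestor relations are preserved (strictly, unless both are duplications). -/
structure IsMULRecon (T : MGraph V E) (lvT : Set V) (t : V → Event) (σ : V → S)
    (M : MGraph D U) (lvM : Set D) (χ : S → Set D) (κ : V → D ⊕ U) : Prop where
  M0 : ∀ (x : V) (d : D), κ x = Sum.inl d → d ∉ D1set M
  M1 : ∀ x ∈ lvT, ∃ d : D, κ x = Sum.inl d ∧ d ∈ lvM ∧ d ∈ χ (σ x)
  M2i : ∀ x : V, x ∉ lvT → t x = Event.spec →
      ∃ d : D, κ x = Sum.inl d ∧ d ∉ lvM ∧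
        ∃ c₁ c₂ : V, T.Adj x c₁ ∧ T.Adj x c₂ ∧ c₁ ≠ c₂ ∧
          ∃ a₁ a₂ : U, M.tail a₁ = d ∧ M.tail a₂ = d ∧
            M.Reach (M.head a₁) (M.hpt (κ c₁)) ∧
            M.Reach (M.head a₂) (M.hpt (κ c₂)) ∧
            ¬ M.sle (Sum.inr a₁) (Sum.inr a₂) ∧ ¬ M.sle (Sum.inr a₂) (Sum.inr a₁)
  M2ii : ∀ x : V, x ∉ lvT → t x = Event.dupl → ∃ a : U, κ x = Sum.inr a
  M3d : ∀ x y : V, T.vlt x y → x ∉ lvT → y ∉ lvT →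
      t x = Event.dupl → t y = Event.dupl → M.sle (κ x) (κ y)
  M3s : ∀ x y : V, T.vlt x y →
      ¬ (x ∉ lvT ∧ y ∉ lvT ∧ t x = Event.dupl ∧ t y = Event.dupl) →
      M.slt (κ x) (κ y)

/-- Vertices of the unfolding `U*(N)`: directed paths of `N` starting at the root. -/
def RootPath (N : MGraph W F) (ρ : W) : Type :=
  {p : List W // N.IsDiPath p ∧ p.head? = some ρ}

/-- Arcs of the unfolding `U*(N)`: pairs `(P, a)` of a root path `P` and an arc `a`
    of `N` such that `P a` is again a root path. -/
def RootPathArc (N : MGraph W F) (ρ : W) : Type :=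
  {pa : List W × F //
    (N.IsDiPath pa.1 ∧ pa.1.head? = some ρ) ∧
    pa.1.getLast? = some (N.tail pa.2) ∧
    (N.IsDiPath (pa.1 ++ [N.head pa.2]) ∧
      (pa.1 ++ [N.head pa.2]).head? = some ρ)}

/-- The unfolding `U*(N)` of a network `N` with root `ρ`: the pseudo MUL-tree whose
    vertices are the directed paths of `N` starting at the root, with an arc from
    `P` to `P'` iff `P' = P a` for some arc `a` of `N`. -/
def unfoldGraph (N : MGraph W F) (ρ : W) :
    MGraph (RootPath N ρ) (RootPathArc N ρ) where
  tail a := ⟨a.1.1, a.2.1⟩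
  head a := ⟨a.1.1 ++ [N.head a.1.2], a.2.2.2⟩

/-- Leaves of `U*(N)`: the root paths ending in a leaf of `N`. -/
def unfoldLeaves (N : MGraph W F) (ρ : W) (lv : Set W) : Set (RootPath N ρ) :=
  {P | ∃ l ∈ lv, P.1.getLast? = some l}

/-- The labeling `χ*` of `U*(N)`: `χ* x` consists of the root paths ending in the
    leaf labeled `x`. -/
def chiStar (N : MGraph W F) (ρ : W) (sp : S → W) : S → Set (RootPath N ρ) :=
  fun x => {P | P.1.getLast? = some (sp x)}

/- ======================= auxiliary infrastructure ======================= -/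

namespace MGraph
variable {V E : Type}

section Basic
variable (G : MGraph V E)

lemma toTransGen {u v : V} (h : G.Reach u v) (hne : u ≠ v) : Relation.TransGen G.Adj u v := by
  rcases h.cases_head with h' | ⟨c, hc, hcv⟩
  · exact absurd h' hne
  · exact Relation.TransGen.head' hc hcv

lemma reach_ne_of_acyclic (hac : G.Acyclic) {u v : V} (h1 : G.Reach u v) (h2 : G.Reach v u)
    (hne : u ≠ v) : False :=
  hac u ((G.toTransGen h1 hne).trans_left h2)

lemma adj_ne (hac : G.Acyclic) {u v : V} (h : G.Adj u v) : u ≠ v := by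
  rintro rfl; exact hac u (Relation.TransGen.single h)

lemma reach_getLast : ∀ (p : List V), p.Chain' G.Adj → ∀ u : V, p.getLast? = some u →
    ∀ w ∈ p, G.Reach w u := by
  intro p
  induction p with
  | nil => intro _ u _ w hw; simp at hw
  | cons a rest ih =>
    intro hc u hu w hw
    cases rest with
    | nil =>
      simp only [List.getLast?_singleton, Option.some.injEq] at hu
      simp only [List.mem_singleton] at hw
      subst hu; subst hw; exact Relation.ReflTransGen.refl
    | cons b rest' =>
      change List.IsChain _ _ at hc
      rw [List.isChain_cons_cons] at hc
      have hu' : (b :: rest').getLast? = some u := by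
        simpa [List.getLast?_cons_cons] using hu
      rcases List.mem_cons.mp hw with rfl | hw
      · exact Relation.ReflTransGen.head hc.1 (ih hc.2 u hu' b (by simp))
      · exact ih hc.2 u hu' w hw

/-- first-arc lemma -/
lemma exists_first_arc {u v : V} (h : G.Reach u v) (hne : u ≠ v) :
    ∃ e : E, G.tail e = u ∧ G.Reach (G.head e) v := by
  rcases h.cases_head with h' | ⟨c, ⟨e, he1, he2⟩, hcv⟩
  · exact absurd h' hne
  · exact ⟨e, he1, he2 ▸ hcv⟩

lemma nonempty_of_deg_ne_zero {P : E → Prop} (h : Nat.card {e : E // P e} ≠ 0) :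
    ∃ e, P e := by
  obtain ⟨⟨e, he⟩⟩ := (Nat.card_ne_zero.mp h).1
  exact ⟨e, he⟩

lemma deg_ne_zero_of_mem [Finite E] {P : E → Prop} (e : E) (he : P e) :
    Nat.card {e : E // P e} ≠ 0 :=
  Nat.card_ne_zero.mpr ⟨⟨⟨e, he⟩⟩, inferInstance⟩

lemma deg_ne_one_of_two {P : E → Prop} (e₁ e₂ : E) (h1 : P e₁) (h2 : P e₂) (hne : e₁ ≠ e₂) :
    Nat.card {e : E // P e} ≠ 1 := by
  intro h
  have hs := (Nat.card_eq_one_iff_unique.mp h).1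
  exact hne (by simpa using hs.elim ⟨e₁, h1⟩ ⟨e₂, h2⟩)

lemma two_of_deg_two {P : E → Prop} (h : 2 ≤ Nat.card {e : E // P e}) :
    ∃ e₁ e₂, P e₁ ∧ P e₂ ∧ e₁ ≠ e₂ := by
  have hf : Finite {e : E // P e} := by
    rcases finite_or_infinite {e : E // P e} with h' | h'
    · exact h'
    · rw [Nat.card_eq_zero_of_infinite] at h; omega
  have := (Finite.one_lt_card_iff_nontrivial (α := {e : E // P e})).mp h
  obtain ⟨⟨e₁, h1⟩, ⟨e₂, h2⟩, hne⟩ := this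
  exact ⟨e₁, e₂, h1, h2, by simpa using hne⟩

end Basic
end MGraph
/- ======================= network / root-path infrastructure ======================= -/

section Net
variable {W F : Type} {N : MGraph W F} {ρN : W}

/-- last vertex of a root path -/
def RootPath.lastW (P : RootPath N ρN) : W := P.1.getLast P.2.1.1

lemma RootPath.lastW_spec (P : RootPath N ρN) : P.1.getLast? = some P.lastW :=
  List.getLast?_eq_getLast _

lemma RootPath.lastW_eq {P : RootPath N ρN} {u : W} (h : P.1.getLast? = some u) :
    P.lastW = u := by
  have := P.lastW_spec; rw [this] at h; exact (Option.some.injEq _ _ ▸ h)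

lemma RootPath.ext' {P Q : RootPath N ρN} (h : P.1 = Q.1) : P = Q := Subtype.ext h

lemma RootPath.reach_lastW (P : RootPath N ρN) {w : W} (hw : w ∈ P.1) :
    N.Reach w P.lastW :=
  N.reach_getLast P.1 P.2.1.2.1 _ P.lastW_spec w hw

/-- the singleton root path -/
def rootRP (N : MGraph W F) (ρN : W) : RootPath N ρN :=
  ⟨[ρN], ⟨by simp, List.isChain_singleton _, by simp⟩, by simp⟩

/-- extending a root path by an arc, as a `RootPathArc`. -/
def mkArc (hac : N.Acyclic) (P : RootPath N ρN) (f : F)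
    (h : P.1.getLast? = some (N.tail f)) : RootPathArc N ρN := by
  refine ⟨(P.1, f), P.2, h, ⟨⟨by simp, ?_, ?_⟩, ?_⟩⟩
  · change List.IsChain _ _
    rw [List.isChain_append]
    refine ⟨P.2.1.2.1, by simp, ?_⟩
    intro x hx y hy
    simp only [h, Option.mem_def, Option.some.injEq, List.head?_cons] at hx hy
    subst hx; subst hy
    exact ⟨f, rfl, rfl⟩
  · rw [List.nodup_append]
    refine ⟨P.2.1.2.2, by simp, ?_⟩
    intro a ha b hb hab
    simp only [List.mem_singleton] at hb
    subst hb
    subst hab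
    have h1 : N.Reach (N.head f) (N.tail f) := by
      have := P.reach_lastW ha
      rwa [P.lastW_eq h] at this
    have h2 : N.Adj (N.tail f) (N.head f) := ⟨f, rfl, rfl⟩
    exact N.reach_ne_of_acyclic hac h1 (Relation.ReflTransGen.single h2)
      (Ne.symm (N.adj_ne hac h2))
  · rw [List.head?_append_of_ne_nil _ P.2.1.1]
    exact P.2.2

@[simp] lemma mkArc_fst (hac : N.Acyclic) (P : RootPath N ρN) (f : F)
    (h : P.1.getLast? = some (N.tail f)) : (mkArc hac P f h).1 = (P.1, f) := rfl

/-- the head of a `RootPathArc`, as a root path -/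
def RootPathArc.headRP (a : RootPathArc N ρN) : RootPath N ρN :=
  ⟨a.1.1 ++ [N.head a.1.2], a.2.2.2⟩

/-- the tail of a `RootPathArc`, as a root path -/
def RootPathArc.tailRP (a : RootPathArc N ρN) : RootPath N ρN := ⟨a.1.1, a.2.1⟩

@[simp] lemma unfold_tail (a : RootPathArc N ρN) :
    (unfoldGraph N ρN).tail a = a.tailRP := rfl

@[simp] lemma unfold_head (a : RootPathArc N ρN) :
    (unfoldGraph N ρN).head a = a.headRP := rfl

lemma RootPathArc.headRP_lastW (a : RootPathArc N ρN) :
    a.headRP.lastW = N.head a.1.2 :=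
  RootPath.lastW_eq (by simp [headRP, List.getLast?_concat])

lemma RootPathArc.tailRP_lastW (a : RootPathArc N ρN) :
    a.tailRP.lastW = N.tail a.1.2 :=
  RootPath.lastW_eq a.2.2.1

/-- extension lemma: a root path can be extended along reachability -/
lemma exists_extend (hac : N.Acyclic) (P : RootPath N ρN) {u v : W}
    (hu : P.1.getLast? = some u) (h : N.Reach u v) :
    ∃ Q : RootPath N ρN, P.1 <+: Q.1 ∧ Q.1.getLast? = some v := by
  induction h with
  | refl => exact ⟨P, List.prefix_refl _, hu⟩
  | tail hmb hadj ih =>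
    obtain ⟨Q, hpre, hlast⟩ := ih
    obtain ⟨f, hf1, hf2⟩ := hadj
    have hlast' : Q.1.getLast? = some (N.tail f) := by rw [hlast, hf1]
    refine ⟨(mkArc hac Q f hlast').headRP, ?_, ?_⟩
    · exact hpre.trans (by simp [RootPathArc.headRP, mkArc])
    · simp [RootPathArc.headRP, mkArc, List.getLast?_concat, hf2]

end Net
/- ======================= unfolding: reach = prefix ======================= -/

section Unfold
variable {W F : Type} {N : MGraph W F} {ρN : W}

lemma unfold_adj_length {P Q : RootPath N ρN} (h : (unfoldGraph N ρN).Adj P Q) :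
    Q.1.length = P.1.length + 1 := by
  obtain ⟨a, ha1, ha2⟩ := h
  have h1 : P.1 = a.1.1 := congrArg Subtype.val ha1.symm
  have h2 : Q.1 = a.1.1 ++ [N.head a.1.2] := congrArg Subtype.val ha2.symm
  rw [h1, h2]; simp

lemma unfold_reach_prefix {P Q : RootPath N ρN} (h : (unfoldGraph N ρN).Reach P Q) :
    P.1 <+: Q.1 := by
  induction h with
  | refl => exact List.prefix_refl _
  | tail _ hadj ih =>
    obtain ⟨a, ha1, ha2⟩ := hadj
    have h1 : a.1.1 = _ := congrArg Subtype.val ha1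
    have h2 : _ = a.1.1 ++ [N.head a.1.2] := (congrArg Subtype.val ha2).symm
    rw [h2, h1]
    exact ih.trans (List.prefix_append _ _)

lemma unfold_reach_length {P Q : RootPath N ρN} (h : (unfoldGraph N ρN).Reach P Q) :
    P.1.length ≤ Q.1.length := (unfold_reach_prefix h).length_le

lemma unfold_reach_length_lt {P Q : RootPath N ρN} (h : (unfoldGraph N ρN).Reach P Q)
    (hne : P ≠ Q) : P.1.length < Q.1.length := by
  rcases lt_or_eq_of_le (unfold_reach_length h) with h' | h'
  · exact h'
  · exact absurd (RootPath.ext' ((unfold_reach_prefix h).eq_of_length h')) hne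

lemma unfold_acyclic : (unfoldGraph N ρN).Acyclic := by
  intro P htg
  have : ∀ Q : RootPath N ρN, Relation.TransGen (unfoldGraph N ρN).Adj P Q →
      P.1.length < Q.1.length := by
    intro Q h
    induction h with
    | single h => rw [unfold_adj_length h]; omega
    | tail _ hadj ih => rw [unfold_adj_length hadj]; omega
  exact absurd (this P htg) (by omega)

lemma unfold_prefix_reach (P : RootPath N ρN) :
    ∀ (Q : RootPath N ρN), P.1 <+: Q.1 → (unfoldGraph N ρN).Reach P Q := by
  suffices h : ∀ (s : List W) (Q : RootPath N ρN), Q.1 = P.1 ++ s →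
      (unfoldGraph N ρN).Reach P Q by
    intro Q hpre
    obtain ⟨s, hs⟩ := hpre
    exact h s Q hs.symm
  intro s
  induction s using List.reverseRecOn with
  | nil =>
    intro Q hQ
    simp at hQ
    rw [RootPath.ext' hQ]
    exact Relation.ReflTransGen.refl
  | append_singleton s v ih =>
    intro Q hQ
    have hQ' : Q.1 = (P.1 ++ s) ++ [v] := by rw [hQ, List.append_assoc]
    have hne : P.1 ++ s ≠ [] := by
      intro h; exact P.2.1.1 (List.append_eq_nil_iff.mp h).1
    have hpre' : P.1 ++ s <+: Q.1 := by rw [hQ']; exact List.prefix_append _ _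
    have hQpath := Q.2
    -- the truncated path is a root path
    have hQ'path : N.IsDiPath (P.1 ++ s) ∧ (P.1 ++ s).head? = some ρN := by
      refine ⟨⟨hne, List.IsChain.prefix hQpath.1.2.1 hpre', hQpath.1.2.2.sublist hpre'.sublist⟩, ?_⟩
      rw [List.head?_append_of_ne_nil _ P.2.1.1]
      exact P.2.2
    set Q' : RootPath N ρN := ⟨P.1 ++ s, hQ'path⟩ with hQ'def
    have hadjN : N.Adj ((P.1 ++ s).getLast hne) v := by
      have hc : (Q.1).Chain' N.Adj := Q.2.1.2.1
      rw [hQ'] at hc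
      change List.IsChain _ _ at hc
      rw [List.isChain_append] at hc
      exact hc.2.2 _ (List.getLast?_eq_getLast hne) v (by simp)
    obtain ⟨f, hf1, hf2⟩ := hadjN
    have hlast : Q'.1.getLast? = some (N.tail f) := by
      rw [hf1]; exact List.getLast?_eq_getLast hne
    have hcat : Q'.1 ++ [N.head f] = Q.1 := by rw [hf2, hQ']
    refine Relation.ReflTransGen.tail (ih Q' rfl) ?_
    refine ⟨⟨(Q'.1, f), Q'.2, hlast, by rw [hcat]; exact Q.2⟩, rfl, ?_⟩
    apply RootPath.ext'
    exact hcat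

end Unfold
/- ======================= unfolding: order lemmas ======================= -/

section UnfoldOrder
variable {W F : Type} {N : MGraph W F} {ρN : W}

lemma arc_step (b : RootPathArc N ρN) :
    (unfoldGraph N ρN).Reach b.tailRP b.headRP :=
  Relation.ReflTransGen.single ⟨b, rfl, rfl⟩

lemma arc_len (b : RootPathArc N ρN) : b.headRP.1.length = b.tailRP.1.length + 1 := by
  simp [RootPathArc.headRP, RootPathArc.tailRP]

lemma arc_vlt (b : RootPathArc N ρN) :
    (unfoldGraph N ρN).vlt b.headRP b.tailRP := by
  refine ⟨arc_step b, ?_⟩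
  intro h
  have := congrArg (fun P : RootPath N ρN => P.1.length) h
  simp only [arc_len] at this
  omega

lemma unfold_vlt_of_reach_ne {P Q : RootPath N ρN}
    (h : (unfoldGraph N ρN).Reach Q P) (hne : P.1.length ≠ Q.1.length) :
    (unfoldGraph N ρN).vlt P Q :=
  ⟨h, fun he => hne (by rw [he])⟩

lemma uslt_trans {a b c : RootPath N ρN ⊕ RootPathArc N ρN}
    (h1 : (unfoldGraph N ρN).slt a b) (h2 : (unfoldGraph N ρN).slt b c) :
    (unfoldGraph N ρN).slt a c := by
  obtain (P | a) := a <;> obtain (Q | b) := b <;> obtain (R | c) := c <;>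
    simp only [MGraph.slt, MGraph.vlt, MGraph.vle, unfold_tail, unfold_head] at *
  · -- lll
    refine ⟨h2.1.trans h1.1, ?_⟩
    intro he
    have l1 := unfold_reach_length_lt h1.1 (Ne.symm h1.2)
    have l2 := unfold_reach_length_lt h2.1 (Ne.symm h2.2)
    rw [he] at l1; omega
  · -- llr
    exact h2.trans h1.1
  · -- lrl
    refine ⟨(h2.trans (arc_step b)).trans h1, ?_⟩
    intro he
    have l1 := unfold_reach_length h1
    have l2 := unfold_reach_length h2
    have l3 := arc_len b
    subst he; omega
  · -- lrr
    exact ((h2.2.1.trans (arc_step b)).trans h1)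
  · -- rll
    exact h2.1.trans h1
  · -- rlr
    exact ⟨arc_vlt a, (h2.trans h1), arc_vlt c⟩
  · -- rrl
    exact (h2.trans (arc_step b)).trans h1.2.1
  · -- rrr
    exact ⟨h1.1, (h2.2.1.trans (arc_step b)).trans h1.2.1, h2.2.2⟩

lemma usle_trans {a b c : RootPath N ρN ⊕ RootPathArc N ρN}
    (h1 : (unfoldGraph N ρN).sle a b) (h2 : (unfoldGraph N ρN).sle b c) :
    (unfoldGraph N ρN).sle a c := by
  rcases h1 with rfl | h1
  · exact h2
  · rcases h2 with rfl | h2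
    · exact Or.inr h1
    · exact Or.inr (uslt_trans h1 h2)

lemma uslt_of_slt_sle {a b c : RootPath N ρN ⊕ RootPathArc N ρN}
    (h1 : (unfoldGraph N ρN).slt a b) (h2 : (unfoldGraph N ρN).sle b c) :
    (unfoldGraph N ρN).slt a c := by
  rcases h2 with rfl | h2
  · exact h1
  · exact uslt_trans h1 h2

lemma uslt_of_sle_slt {a b c : RootPath N ρN ⊕ RootPathArc N ρN}
    (h1 : (unfoldGraph N ρN).sle a b) (h2 : (unfoldGraph N ρN).slt b c) :
    (unfoldGraph N ρN).slt a c := by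
  rcases h1 with rfl | h1
  · exact h2
  · exact uslt_trans h1 h2

end UnfoldOrder

/- ======================= folding ======================= -/

section Fold
variable {W F : Type} {N : MGraph W F} {ρN : W}

/-- folding a point of the unfolding back to the network -/
def foldPt (q : RootPath N ρN ⊕ RootPathArc N ρN) : W ⊕ F :=
  match q with
  | Sum.inl P => Sum.inl P.lastW
  | Sum.inr a => Sum.inr a.1.2

lemma fold_reach {P Q : RootPath N ρN} (h : (unfoldGraph N ρN).Reach P Q) :
    N.Reach P.lastW Q.lastW := by
  induction h with
  | refl => exact Relation.ReflTransGen.refl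
  | tail _ hadj ih =>
    obtain ⟨a, ha1, ha2⟩ := hadj
    rw [unfold_tail] at ha1; rw [unfold_head] at ha2
    subst ha1; subst ha2
    refine ih.tail ?_
    rw [RootPathArc.tailRP_lastW, RootPathArc.headRP_lastW]
    exact ⟨a.1.2, rfl, rfl⟩

lemma fold_lastW_ne {P Q : RootPath N ρN} (h : (unfoldGraph N ρN).Reach Q P)
    (hne : P ≠ Q) : P.lastW ≠ Q.lastW := by
  obtain ⟨s, hs⟩ := unfold_reach_prefix h
  have hsne : s ≠ [] := by
    rintro rfl
    simp at hs
    exact hne (RootPath.ext' hs.symm)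
  have hQl : P.lastW ∈ s := by
    have : P.1.getLast? = s.getLast? := by
      rw [← hs, List.getLast?_append_of_ne_nil _ hsne]
    have h2 : P.1.getLast? = some (s.getLast hsne) := by
      rw [this]; exact List.getLast?_eq_getLast _
    rw [RootPath.lastW_eq h2]
    exact List.getLast_mem hsne
  have hPl : Q.lastW ∈ Q.1 := List.getLast_mem _
  have hnd : (Q.1 ++ s).Nodup := by rw [hs]; exact P.2.1.2.2
  rw [List.nodup_append] at hnd
  intro he
  exact hnd.2.2 _ hPl _ hQl he.symm

lemma N_arc_vlt (hac : N.Acyclic) (f : F) : N.vlt (N.head f) (N.tail f) := by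
  have h : N.Adj (N.tail f) (N.head f) := ⟨f, rfl, rfl⟩
  exact ⟨Relation.ReflTransGen.single h, Ne.symm (N.adj_ne hac h)⟩

lemma fold_slt (hac : N.Acyclic) {a b : RootPath N ρN ⊕ RootPathArc N ρN}
    (h : (unfoldGraph N ρN).slt a b) : N.slt (foldPt a) (foldPt b) := by
  obtain (P | a) := a <;> obtain (Q | b) := b <;>
    simp only [MGraph.slt, MGraph.vlt, MGraph.vle, unfold_tail, unfold_head, foldPt] at *
  · exact ⟨fold_reach h.1, fold_lastW_ne h.1 h.2⟩
  · have := fold_reach h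
    rwa [RootPathArc.headRP_lastW] at this
  · have := fold_reach h
    rwa [RootPathArc.tailRP_lastW] at this
  · refine ⟨N_arc_vlt hac _, ?_, N_arc_vlt hac _⟩
    have := fold_reach h.2.1
    rwa [RootPathArc.headRP_lastW, RootPathArc.tailRP_lastW] at this

lemma fold_sle (hac : N.Acyclic) {a b : RootPath N ρN ⊕ RootPathArc N ρN}
    (h : (unfoldGraph N ρN).sle a b) : N.sle (foldPt a) (foldPt b) := by
  rcases h with rfl | h
  · exact Or.inl rfl
  · exact Or.inr (fold_slt hac h)

end Fold
/- ======================= backward direction ======================= -/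

section Backward
variable {V E W F S : Type} {N : MGraph W F} {ρN : W}

lemma fold_hpt (q : RootPath N ρN ⊕ RootPathArc N ρN) :
    ((unfoldGraph N ρN).hpt q).lastW = N.hpt (foldPt q) := by
  obtain (P | a) := q
  · rfl
  · show ((unfoldGraph N ρN).head a).lastW = N.head a.1.2
    rw [unfold_head]; exact a.headRP_lastW

lemma backward_recon (T : MGraph V E) (lvT : Set V) (t : V → Event) (σ : V → S)
    (lvN : Set W) (sp : S → W)
    (hacN : N.Acyclic) (hmf : N.MultiArcFree)
    (κ : V → RootPath N ρN ⊕ RootPathArc N ρN)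
    (hκ : IsMULRecon T lvT t σ (unfoldGraph N ρN) (unfoldLeaves N ρN lvN)
      (chiStar N ρN sp) κ) :
    IsTreeNetRecon T lvT t σ N sp (fun x => foldPt (κ x)) := by
  constructor
  · -- R1
    intro x hx
    obtain ⟨d, hd1, _, hd3⟩ := hκ.M1 x hx
    rw [hd1]
    show Sum.inl d.lastW = _
    rw [RootPath.lastW_eq hd3]
  · -- R2i
    intro x hx htx
    obtain ⟨d, hκx, _, c₁, c₂, hadj1, hadj2, _, a₁, a₂, ht1, ht2, hr1, hr2, hns1, _⟩ :=
      hκ.M2i x hx htx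
    rw [hκx]
    refine ⟨d.lastW, rfl, c₁, c₂, hadj1, hadj2, ?_⟩
    have hval1 : a₁.1.1 = d.1 := congrArg Subtype.val (unfold_tail a₁ ▸ ht1 :
      a₁.tailRP = d)
    have hval2 : a₂.1.1 = d.1 := congrArg Subtype.val (unfold_tail a₂ ▸ ht2 :
      a₂.tailRP = d)
    have htl1 : N.tail a₁.1.2 = d.lastW := by
      have := a₁.2.2.1
      rw [hval1] at this
      exact (RootPath.lastW_eq this).symm
    have htl2 : N.tail a₂.1.2 = d.lastW := by
      have := a₂.2.2.1
      rw [hval2] at this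
      exact (RootPath.lastW_eq this).symm
    have hene : a₁.1.2 ≠ a₂.1.2 := by
      intro he
      apply hns1
      left
      congr 1
      apply Subtype.ext
      rw [Prod.ext_iff]
      exact ⟨by rw [hval1, hval2], he⟩
    have hzne : N.head a₁.1.2 ≠ N.head a₂.1.2 := by
      intro he
      exact hene (hmf _ _ (by rw [htl1, htl2]) he)
    refine ⟨N.head a₁.1.2, N.head a₂.1.2, hzne, ⟨a₁.1.2, htl1, rfl⟩, ⟨a₂.1.2, htl2, rfl⟩, ?_, ?_⟩
    · have := fold_reach hr1
      rwa [(unfold_head a₁ ▸ rfl : (unfoldGraph N ρN).head a₁ = a₁.headRP),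
        RootPathArc.headRP_lastW, fold_hpt] at this
    · have := fold_reach hr2
      rwa [(unfold_head a₂ ▸ rfl : (unfoldGraph N ρN).head a₂ = a₂.headRP),
        RootPathArc.headRP_lastW, fold_hpt] at this
  · -- R2ii
    intro x hx htx
    obtain ⟨a, ha⟩ := hκ.M2ii x hx htx
    exact ⟨a.1.2, by rw [ha]; rfl⟩
  · -- R3d
    intro x y h1 h2 h3 h4 h5
    exact fold_sle hacN (hκ.M3d x y h1 h2 h3 h4 h5)
  · -- R3s
    intro x y h1 h2
    exact fold_slt hacN (hκ.M3s x y h1 h2)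

end Backward
/- ======================= forward direction: setup ======================= -/

section Forward
variable {V E W F S : Type}

/-- anchoring condition: a point of the unfolding lies over the given point of `N` -/
abbrev Anch (N : MGraph W F) (ρN : W) (m : W ⊕ F)
    (q : RootPath N ρN ⊕ RootPathArc N ρN) : Prop :=
  (∀ w, m = Sum.inl w → ∃ P : RootPath N ρN, q = Sum.inl P ∧ P.1.getLast? = some w) ∧
  (∀ e, m = Sum.inr e → ∃ a : RootPathArc N ρN, q = Sum.inr a ∧ N.head a.1.2 = N.head e)

abbrev BothD (lvT : Set V) (t : V → Event) (x y : V) : Prop :=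
  x ∉ lvT ∧ y ∉ lvT ∧ t x = Event.dupl ∧ t y = Event.dupl

/-- list of vertices of the head-point of a point of the unfolding -/
abbrev hptL (N : MGraph W F) (ρN : W) (q : RootPath N ρN ⊕ RootPathArc N ρN) : List W :=
  ((unfoldGraph N ρN).hpt q).1

/-- extension feasibility: child with image `m` can be routed through arc `g` -/
abbrev ExtOK (N : MGraph W F) (g : F) (m : W ⊕ F) : Prop :=
  N.Reach (N.head g) (N.tpt m) ∨ ∃ f, m = Sum.inr f ∧ N.Reach (N.head g) (N.head f)

/-- postcondition of one construction step -/
abbrev Post (lvT : Set V) (t : V → Event) (μ : V → W ⊕ F) {N : MGraph W F} {ρN : W}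
    (d1 d2 : V → V) (g1 g2 : V → F) (y x : V)
    (q q' : RootPath N ρN ⊕ RootPathArc N ρN) : Prop :=
  Anch N ρN (μ x) q' ∧
  (unfoldGraph N ρN).sle q' q ∧
  (¬ BothD lvT t x y → (unfoldGraph N ρN).slt q' q) ∧
  (∀ P : RootPath N ρN, q = Sum.inl P → x = d1 y →
    (P.1 ++ [N.head (g1 y)]) <+: hptL N ρN q') ∧
  (∀ P : RootPath N ρN, q = Sum.inl P → x = d2 y →
    (P.1 ++ [N.head (g2 y)]) <+: hptL N ρN q')

variable {N : MGraph W F} {ρN : W}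

/-- in a network, the root reaches every vertex -/
lemma root_reaches {lvN : Set W} (hN : IsNetwork N lvN ρN) (v : W) : N.Reach ρN v := by
  have hfV : Finite W := hN.finV
  have hfE : Finite F := hN.finE
  have hwf : WellFounded (fun a b : W => Relation.TransGen N.Adj a b) := by
    have h1 : IsTrans W (fun a b : W => Relation.TransGen N.Adj a b) :=
      ⟨fun _ _ _ h1 h2 => h1.trans h2⟩
    have h2 : IsIrrefl W (fun a b : W => Relation.TransGen N.Adj a b) :=
      ⟨fun a h => hN.acyclic a h⟩
    exact Finite.wellFounded_of_trans_of_irrefl _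
  induction v using WellFounded.induction hwf with
  | _ v ih =>
    by_cases hv : v = ρN
    · subst hv; exact Relation.ReflTransGen.refl
    · have hdeg : N.inDeg v ≠ 0 := by
        by_cases hlv : v ∈ lvN
        · rw [((hN.leaf_iff v).mp hlv).2]; omega
        · rcases hN.inner_deg v hlv hv with ⟨h1, _⟩ | ⟨h1, _⟩ <;> omega
      obtain ⟨e, he⟩ := MGraph.nonempty_of_deg_ne_zero (P := fun e => N.head e = v) hdeg
      have hadj : N.Adj (N.tail e) v := ⟨e, rfl, he⟩
      exact (ih (N.tail e) (Relation.TransGen.single hadj)).tail hadj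

/-- routing a child through a designated arc -/
lemma route (hacN : N.Acyclic) (P : RootPath N ρN) (w : W) (hP : P.1.getLast? = some w)
    (g : F) (hg : N.tail g = w) (m : W ⊕ F) (hok : ExtOK N g m) :
    ∃ q' : RootPath N ρN ⊕ RootPathArc N ρN, Anch N ρN m q' ∧
      (unfoldGraph N ρN).slt q' (Sum.inl P) ∧
      (P.1 ++ [N.head g]) <+: hptL N ρN q' := by
  have harc : P.1.getLast? = some (N.tail g) := by rw [hg]; exact hP
  set A : RootPathArc N ρN := mkArc hacN P g harc with hA
  have hAval : A.headRP.1 = P.1 ++ [N.head g] := rfl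
  have hAlast : A.headRP.1.getLast? = some (N.head g) := by
    rw [hAval]; exact List.getLast?_concat
  obtain (w' | f) := m
  · -- vertex image
    have hr : N.Reach (N.head g) w' := by
      rcases hok with h | ⟨f, hf, _⟩
      · exact h
      · simp at hf
    obtain ⟨Q, hpre, hlast⟩ := exists_extend hacN A.headRP hAlast hr
    refine ⟨Sum.inl Q, ⟨fun w'' hw'' => ⟨Q, rfl, by cases hw''; exact hlast⟩,
      fun e he => by simp at he⟩, ?_, ?_⟩
    · refine unfold_vlt_of_reach_ne (unfold_prefix_reach P Q
        (((List.prefix_append _ _).trans (hAval ▸ hpre)))) ?_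
      have h1 := hpre.length_le
      rw [hAval] at h1
      simp only [List.length_append, List.length_singleton] at h1
      omega
    · exact hAval ▸ hpre
  · -- arc image
    rcases hok with hr | ⟨f', hf', hrh⟩
    · -- route to the tail of f
      obtain ⟨Q, hpre, hlast⟩ := exists_extend hacN A.headRP hAlast hr
      set B : RootPathArc N ρN := mkArc hacN Q f hlast with hB
      refine ⟨Sum.inr B, ⟨fun w'' hw'' => by simp at hw'', fun e he => ⟨B, rfl, by
        cases he; rfl⟩⟩, ?_, ?_⟩
      · show (unfoldGraph N ρN).vle ((unfoldGraph N ρN).tail B) P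
        show (unfoldGraph N ρN).Reach P B.tailRP
        have : B.tailRP = Q := rfl
        rw [this]
        exact unfold_prefix_reach P Q ((List.prefix_append _ _).trans (hAval ▸ hpre))
      · show (P.1 ++ [N.head g]) <+: B.headRP.1
        have : B.headRP.1 = Q.1 ++ [N.head f] := rfl
        rw [this]
        exact ((hAval ▸ hpre).trans (List.prefix_append _ _))
    · -- retarget to an arc with the same head
      cases hf'
      by_cases hhe : N.head g = N.head f
      · refine ⟨Sum.inr A, ⟨fun w'' hw'' => by simp at hw'', fun e he => ⟨A, rfl, by
          cases he; exact hhe⟩⟩, ?_, ?_⟩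
        · show (unfoldGraph N ρN).Reach P A.tailRP
          have : A.tailRP = P := rfl
          rw [this]
          exact Relation.ReflTransGen.refl
        · show (P.1 ++ [N.head g]) <+: A.headRP.1
          rw [hAval]
      · obtain ⟨Q, hpre, hlast⟩ := exists_extend hacN A.headRP hAlast hrh
        have hQne : A.headRP ≠ Q := by
          intro he
          rw [he, hlast] at hAlast
          exact hhe (by injection hAlast with h; exact h.symm)
        have htg := (unfoldGraph N ρN).toTransGen
          (unfold_prefix_reach A.headRP Q hpre) hQne
        obtain ⟨Q'', hr'', hadj⟩ := (Relation.TransGen.tail'_iff).mp htg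
        obtain ⟨a'', ha1, ha2⟩ := hadj
        have hhead : N.head a''.1.2 = N.head f := by
          have h1 : a''.headRP = Q := unfold_head a'' ▸ ha2
          have h2 := a''.headRP_lastW
          rw [h1] at h2
          rw [← h2]
          exact (RootPath.lastW_eq hlast)
        refine ⟨Sum.inr a'', ⟨fun w'' hw'' => by simp at hw'', fun e he => ⟨a'', rfl, by
          cases he; exact hhead⟩⟩, ?_, ?_⟩
        · show (unfoldGraph N ρN).Reach P ((unfoldGraph N ρN).tail a'')
          rw [ha1]
          exact unfold_prefix_reach P Q'' ((List.prefix_append _ _).trans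
            (hAval ▸ (unfold_reach_prefix hr'')))
        · show (P.1 ++ [N.head g]) <+: ((unfoldGraph N ρN).hpt (Sum.inr a'')).1
          have h1 : a''.headRP = Q := unfold_head a'' ▸ ha2
          show (P.1 ++ [N.head g]) <+: a''.headRP.1
          rw [h1]
          exact hAval ▸ hpre

end Forward
/- ======================= forward direction: tree lemmas, slot lemma, step lemma ======================= -/

section ForwardMain
variable {V E W F S : Type} {T : MGraph V E} {lvT : Set V} {ρT : V} {t : V → Event}
  {σ : V → S} {N : MGraph W F} {lvN : Set W} {ρN : W} {sp : S → W} {μ : V → W ⊕ F}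

lemma T_root_not_leaf (hT : IsGeneTree T lvT ρT σ) : ρT ∉ lvT := by
  intro h
  have h1 := ((hT.leaf_iff ρT).mp h).1
  have h2 := hT.root_out
  omega

lemma T_parent_not_leaf (hT : IsGeneTree T lvT ρT σ) {y x : V} (h : T.Adj y x) :
    y ∉ lvT := by
  intro hy
  have h1 := ((hT.leaf_iff y).mp hy).1
  obtain ⟨e, he1, _⟩ := h
  have hfE : Finite E := hT.finE
  exact MGraph.deg_ne_zero_of_mem (P := fun e => T.tail e = y) e he1 h1

lemma T_child_ne_root (hT : IsGeneTree T lvT ρT σ) {y x : V} (h : T.Adj y x) :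
    x ≠ ρT := by
  rintro rfl
  obtain ⟨e, _, he2⟩ := h
  have hfE : Finite E := hT.finE
  exact MGraph.deg_ne_zero_of_mem (P := fun e => T.head e = x) e he2 hT.root_in

lemma T_vlt_of_adj (hT : IsGeneTree T lvT ρT σ) {y x : V} (h : T.Adj y x) : T.vlt x y :=
  ⟨Relation.ReflTransGen.single h, (T.adj_ne hT.acyclic h).symm⟩

lemma T_two_children (hT : IsGeneTree T lvT ρT σ) {x : V} (hx : x ∉ lvT) :
    ∃ c₁ c₂ : V, T.Adj x c₁ ∧ T.Adj x c₂ ∧ c₁ ≠ c₂ := by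
  have hdeg : 2 ≤ T.outDeg x := by
    by_cases hr : x = ρT
    · subst hr; exact hT.root_out
    · exact (hT.inner_deg x hx hr).2
  obtain ⟨e₁, e₂, h1, h2, hne⟩ := MGraph.two_of_deg_two (P := fun e => T.tail e = x) hdeg
  refine ⟨T.head e₁, T.head e₂, ⟨e₁, h1, rfl⟩, ⟨e₂, h2, rfl⟩, ?_⟩
  intro he
  exact hne (hT.multiarc_free e₁ e₂ (h1.trans h2.symm) he)

lemma T_parent (hT : IsGeneTree T lvT ρT σ) {x : V} (hx : x ≠ ρT) :
    ∃ y, T.Adj y x ∧ ∀ z, T.Adj z x → z = y := by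
  have hdeg : T.inDeg x = 1 := by
    by_cases hlv : x ∈ lvT
    · exact ((hT.leaf_iff x).mp hlv).2
    · exact (hT.inner_deg x hlv hx).1
  obtain ⟨hss, hne⟩ := Nat.card_eq_one_iff_unique.mp hdeg
  obtain ⟨⟨e, he⟩⟩ := hne
  refine ⟨T.tail e, ⟨e, rfl, he⟩, ?_⟩
  intro z hz
  obtain ⟨e', he'1, he'2⟩ := hz
  have : (⟨e', he'2⟩ : {f : E // T.head f = x}) = ⟨e, he⟩ := hss.elim _ _
  rw [← he'1]
  rw [Subtype.mk.injEq] at this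
  rw [this]

lemma mu_inl (hT : IsGeneTree T lvT ρT σ) (hμ : IsTreeNetRecon T lvT t σ N sp μ)
    (x : V) (h : x ∈ lvT ∨ t x ≠ Event.dupl) : ∃ w', μ x = Sum.inl w' := by
  by_cases hlv : x ∈ lvT
  · exact ⟨_, hμ.R1 x hlv⟩
  · have hts : t x = Event.spec := by
      rcases h with h | h
      · exact absurd h hlv
      · cases ht : t x
        · rfl
        · exact absurd ht h
    obtain ⟨w, hw, _⟩ := hμ.R2i x hlv hts
    exact ⟨w, hw⟩

/-- Lemma A: good routing arcs for two distinct children of a speciation vertex -/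
lemma lemA (hT : IsGeneTree T lvT ρT σ) (hμ : IsTreeNetRecon T lvT t σ N sp μ)
    (y : V) (hy : y ∉ lvT) (hts : t y = Event.spec) :
    ∃ (d₁ d₂ : V) (gA gB : F), T.Adj y d₁ ∧ T.Adj y d₂ ∧ d₁ ≠ d₂ ∧
      N.tail gA = N.tpt (μ y) ∧ N.tail gB = N.tpt (μ y) ∧ gA ≠ gB ∧
      ExtOK N gA (μ d₁) ∧ ExtOK N gB (μ d₂) := by
  obtain ⟨w, hμy, c₁, c₂, hadj₁, hadj₂, hQ⟩ := hμ.R2i y hy hts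
  have htpt : N.tpt (μ y) = w := by rw [hμy]; rfl
  rw [htpt]
  obtain ⟨z₁, z₂, hzne, ⟨e₁, he₁t, he₁h⟩, ⟨e₂, he₂t, he₂h⟩, hr₁, hr₂⟩ := hQ
  have hene : e₁ ≠ e₂ := by
    rintro rfl
    exact hzne (he₁h.symm.trans he₂h)
  have extof : ∀ (c : V) (e : F), N.Reach (N.head e) (N.hpt (μ c)) → ExtOK N e (μ c) := by
    intro c e h
    cases hm : μ c with
    | inl w' =>
      rw [hm] at h
      exact Or.inl h
    | inr f =>
      rw [hm] at h
      exact Or.inr ⟨f, rfl, h⟩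
  have hre₁ : N.Reach (N.head e₁) (N.hpt (μ c₁)) := by rw [he₁h]; exact hr₁
  have hre₂ : N.Reach (N.head e₂) (N.hpt (μ c₂)) := by rw [he₂h]; exact hr₂
  have ec : ∀ c, T.Adj y c → ∃ g, N.tail g = w ∧ ExtOK N g (μ c) := by
    intro c hadj
    have hslt := hμ.R3s c y (T_vlt_of_adj hT hadj)
      (by rintro ⟨_, _, _, h4⟩; rw [hts] at h4; cases h4)
    rw [hμy] at hslt
    cases hm : μ c with
    | inl w' =>
      rw [hm] at hslt
      obtain ⟨g, hg1, hg2⟩ := N.exists_first_arc hslt.1 (Ne.symm hslt.2)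
      exact ⟨g, hg1, Or.inl hg2⟩
    | inr f =>
      rw [hm] at hslt
      by_cases htf : N.tail f = w
      · exact ⟨f, htf, Or.inr ⟨f, rfl, Relation.ReflTransGen.refl⟩⟩
      · obtain ⟨g, hg1, hg2⟩ := N.exists_first_arc hslt (fun h => htf h.symm)
        exact ⟨g, hg1, Or.inl hg2⟩
  by_cases hcc : c₁ = c₂
  · subst hcc
    obtain ⟨u₁, u₂, hu₁, hu₂, hune⟩ := T_two_children hT hy
    have hd : ∃ d, T.Adj y d ∧ d ≠ c₁ := by
      by_cases h : u₁ = c₁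
      · exact ⟨u₂, hu₂, by rw [h] at hune; exact hune.symm⟩
      · exact ⟨u₁, hu₁, h⟩
    obtain ⟨d, hdadj, hdne⟩ := hd
    obtain ⟨g, hg1, hg2⟩ := ec d hdadj
    by_cases hge : g = e₁
    · exact ⟨d, c₁, g, e₂, hdadj, hadj₁, hdne, hg1, he₂t, by rw [hge]; exact hene, hg2,
        extof c₁ e₂ hre₂⟩
    · exact ⟨d, c₁, g, e₁, hdadj, hadj₁, hdne, hg1, he₁t, hge, hg2, extof c₁ e₁ hre₁⟩
  · exact ⟨c₁, c₂, e₁, e₂, hadj₁, hadj₂, hcc, he₁t, he₂t, hene, extof c₁ e₁ hre₁,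
      extof c₂ e₂ hre₂⟩

/-- existence of an anchored point over any point of `N` -/
lemma anch_exists (hacN : N.Acyclic) (hN : IsNetwork N lvN ρN) (m : W ⊕ F) :
    ∃ q : RootPath N ρN ⊕ RootPathArc N ρN, Anch N ρN m q := by
  have hroot : (rootRP N ρN).1.getLast? = some ρN := by simp [rootRP]
  obtain (w | e) := m
  · obtain ⟨Q, _, hlast⟩ := exists_extend hacN (rootRP N ρN) hroot (root_reaches hN w)
    refine ⟨Sum.inl Q, ?_, ?_⟩
    · intro w' hw'
      cases hw'
      exact ⟨Q, rfl, hlast⟩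
    · intro e he
      cases he
  · obtain ⟨Q, _, hlast⟩ := exists_extend hacN (rootRP N ρN) hroot
      (root_reaches hN (N.tail e))
    refine ⟨Sum.inr (mkArc hacN Q e hlast), ?_, ?_⟩
    · intro w' hw'
      cases hw'
    · intro e' he'
      cases he'
      exact ⟨mkArc hacN Q e hlast, rfl, rfl⟩

end ForwardMain
/- ======================= forward direction: the step lemma ======================= -/

section StepLemma
variable {V E W F S : Type} {T : MGraph V E} {lvT : Set V} {ρT : V} {t : V → Event}
  {σ : V → S} {N : MGraph W F} {lvN : Set W} {ρN : W} {sp : S → W} {μ : V → W ⊕ F}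

lemma step_lemma (hacN : N.Acyclic) (hT : IsGeneTree T lvT ρT σ)
    (hμ : IsTreeNetRecon T lvT t σ N sp μ)
    (d1 d2 : V → V) (g1 g2 : V → F)
    (hslot : ∀ y, y ∉ lvT → t y = Event.spec →
      T.Adj y (d1 y) ∧ T.Adj y (d2 y) ∧ d1 y ≠ d2 y ∧
      N.tail (g1 y) = N.tpt (μ y) ∧ N.tail (g2 y) = N.tpt (μ y) ∧ g1 y ≠ g2 y ∧
      ExtOK N (g1 y) (μ (d1 y)) ∧ ExtOK N (g2 y) (μ (d2 y)))
    (y x : V) (hadj : T.Adj y x)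
    (q : RootPath N ρN ⊕ RootPathArc N ρN) (hq : Anch N ρN (μ y) q) :
    ∃ q', Post lvT t μ d1 d2 g1 g2 y x q q' := by
  have hylv : y ∉ lvT := T_parent_not_leaf hT hadj
  have hvlt : T.vlt x y := T_vlt_of_adj hT hadj
  cases hty : t y with
  | spec =>
    obtain ⟨w, hμy, -⟩ := hμ.R2i y hylv hty
    obtain ⟨P, hqP, hPl⟩ := hq.1 w hμy
    subst hqP
    have htpt : N.tpt (μ y) = w := by rw [hμy]; rfl
    obtain ⟨hD1, hD2, hDne, hg1t, hg2t, hgne, hok1, hok2⟩ := hslot y hylv hty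
    have hnb : ∀ z : Prop, ¬ BothD lvT t x y := by
      intro _
      rintro ⟨_, _, _, h4⟩
      rw [hty] at h4
      cases h4
    by_cases hx1 : x = d1 y
    · obtain ⟨q', hA, hslt, hpre⟩ := route hacN P w hPl (g1 y) (by rw [hg1t, htpt])
        (μ x) (by rw [hx1]; exact hok1)
      refine ⟨q', hA, Or.inr hslt, fun _ => hslt, ?_, ?_⟩
      · intro P' hP' _
        have hPP : P = P' := by injection hP'
        subst hPP
        exact hpre
      · intro P' hP' hxd2
        exact absurd (hx1.symm.trans hxd2) hDne
    · by_cases hx2 : x = d2 y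
      · obtain ⟨q', hA, hslt, hpre⟩ := route hacN P w hPl (g2 y) (by rw [hg2t, htpt])
          (μ x) (by rw [hx2]; exact hok2)
        refine ⟨q', hA, Or.inr hslt, fun _ => hslt, ?_, ?_⟩
        · intro P' hP' hxd1
          exact absurd hxd1 hx1
        · intro P' hP' _
          have hPP : P = P' := by injection hP'
          subst hPP
          exact hpre
      · -- generic child of a speciation vertex
        have hslt := hμ.R3s x y hvlt (by rintro ⟨_, _, _, h4⟩; rw [hty] at h4; cases h4)
        rw [hμy] at hslt
        cases hm : μ x with
        | inl w' =>
          rw [hm] at hslt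
          obtain ⟨Q, hpre, hlast⟩ := exists_extend hacN P hPl hslt.1
          have hQP : Q ≠ P := by
            intro he
            rw [he] at hlast
            rw [hPl] at hlast
            exact hslt.2 (by injection hlast with h; exact h.symm)
          refine ⟨Sum.inl Q, ⟨?_, ?_⟩, ?_, ?_, ?_, ?_⟩
          · intro w'' hw''
            rw [hm] at hw''
            injection hw'' with h
            subst h
            exact ⟨Q, rfl, hlast⟩
          · intro e he
            rw [hm] at he
            cases he
          · exact Or.inr ⟨unfold_prefix_reach P Q hpre, hQP⟩
          · exact fun _ => ⟨unfold_prefix_reach P Q hpre, hQP⟩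
          · intro P' hP' hxd1
            exact absurd hxd1 hx1
          · intro P' hP' hxd2
            exact absurd hxd2 hx2
        | inr f =>
          rw [hm] at hslt
          obtain ⟨Q, hpre, hlast⟩ := exists_extend hacN P hPl hslt
          refine ⟨Sum.inr (mkArc hacN Q f hlast), ⟨?_, ?_⟩, ?_, ?_, ?_, ?_⟩
          · intro w'' hw''
            rw [hm] at hw''
            cases hw''
          · intro e he
            rw [hm] at he
            injection he with h
            subst h
            exact ⟨mkArc hacN Q f hlast, rfl, rfl⟩
          · refine Or.inr ?_
            show (unfoldGraph N ρN).Reach P (mkArc hacN Q f hlast).tailRP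
            exact unfold_prefix_reach P Q hpre
          · intro _
            show (unfoldGraph N ρN).Reach P (mkArc hacN Q f hlast).tailRP
            exact unfold_prefix_reach P Q hpre
          · intro P' hP' hxd1
            exact absurd hxd1 hx1
          · intro P' hP' hxd2
            exact absurd hxd2 hx2
  | dupl =>
    obtain ⟨e, hμy⟩ := hμ.R2ii y hylv hty
    obtain ⟨a, hqa, hah⟩ := hq.2 e hμy
    subst hqa
    have hHl : a.headRP.1.getLast? = some (N.head a.1.2) := by
      show (a.1.1 ++ [N.head a.1.2]).getLast? = _
      exact List.getLast?_concat
    by_cases hbx : x ∉ lvT ∧ t x = Event.dupl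
    · obtain ⟨f, hμx⟩ := hμ.R2ii x hbx.1 hbx.2
      have hsle := hμ.R3d x y hvlt hbx.1 hylv hbx.2 hty
      rw [hμx, hμy] at hsle
      rcases hsle with heq | hslt
      · -- equal arcs
        have hfe : f = e := by injection heq
        refine ⟨Sum.inr a, ⟨?_, ?_⟩, Or.inl rfl, ?_, ?_, ?_⟩
        · intro w'' hw''
          rw [hμx] at hw''
          cases hw''
        · intro e' he'
          rw [hμx] at he'
          cases he'
          rw [← hfe] at hah
          exact ⟨a, rfl, hah⟩
        · intro hnb
          exact absurd ⟨hbx.1, hylv, hbx.2, hty⟩ hnb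
        · intro P hP _
          cases hP
        · intro P hP _
          cases hP
      · -- strictly below
        have hr : N.Reach (N.head a.1.2) (N.tail f) := by
          rw [hah]
          exact hslt.2.1
        obtain ⟨Q, hpre, hlast⟩ := exists_extend hacN a.headRP hHl hr
        have hsltu : (unfoldGraph N ρN).slt (Sum.inr (mkArc hacN Q f hlast)) (Sum.inr a) := by
          refine ⟨arc_vlt _, ?_, arc_vlt _⟩
          show (unfoldGraph N ρN).Reach a.headRP (mkArc hacN Q f hlast).tailRP
          exact unfold_prefix_reach _ Q hpre
        refine ⟨Sum.inr (mkArc hacN Q f hlast), ⟨?_, ?_⟩, Or.inr hsltu, fun _ => hsltu,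
          ?_, ?_⟩
        · intro w'' hw''
          rw [hμx] at hw''
          cases hw''
        · intro e' he'
          rw [hμx] at he'
          cases he'
          exact ⟨mkArc hacN Q f hlast, rfl, rfl⟩
        · intro P hP _
          cases hP
        · intro P hP _
          cases hP
    · -- child is not an inner duplication vertex
      have hμxl : ∃ w', μ x = Sum.inl w' := by
        refine mu_inl hT hμ x ?_
        by_cases hlv : x ∈ lvT
        · exact Or.inl hlv
        · refine Or.inr fun hd => hbx ⟨hlv, hd⟩
      obtain ⟨w', hμx⟩ := hμxl
      have hslt := hμ.R3s x y hvlt (by rintro ⟨h1, _, h3, _⟩; exact hbx ⟨h1, h3⟩)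
      rw [hμx, hμy] at hslt
      have hr : N.Reach (N.head a.1.2) w' := by
        rw [hah]
        exact hslt
      obtain ⟨Q, hpre, hlast⟩ := exists_extend hacN a.headRP hHl hr
      have hsltu : (unfoldGraph N ρN).slt (Sum.inl Q) (Sum.inr a) := by
        show (unfoldGraph N ρN).Reach a.headRP Q
        exact unfold_prefix_reach _ Q hpre
      refine ⟨Sum.inl Q, ⟨?_, ?_⟩, Or.inr hsltu, fun _ => hsltu, ?_, ?_⟩
      · intro w'' hw''
        rw [hμx] at hw''
        cases hw''
        exact ⟨Q, rfl, hlast⟩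
      · intro e' he'
        rw [hμx] at he'
        cases he'
      · intro P hP _
        cases hP
      · intro P hP _
        cases hP

end StepLemma
/- ======================= forward direction: main construction ======================= -/

section ForwardFinal
variable {V E W F S : Type} {T : MGraph V E} {lvT : Set V} {ρT : V} {t : V → Event}
  {σ : V → S} {N : MGraph W F} {lvN : Set W} {ρN : W} {sp : S → W} {μ : V → W ⊕ F}

lemma forward_recon (hT : IsGeneTree T lvT ρT σ) (hN : IsNetwork N lvN ρN)
    (hsp : IsLeafLabeling N lvN sp) (hμ : IsTreeNetRecon T lvT t σ N sp μ) :
    ∃ κ : V → RootPath N ρN ⊕ RootPathArc N ρN,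
      IsMULRecon T lvT t σ (unfoldGraph N ρN) (unfoldLeaves N ρN lvN)
        (chiStar N ρN sp) κ := by
  classical
  have hacN : N.Acyclic := hN.acyclic
  have hacT : T.Acyclic := hT.acyclic
  have hfinF : Finite F := hN.finE
  have hfinV : Finite V := hT.finV
  -- nonempty arcs in N
  have hFne : Nonempty F := by
    have h : N.outDeg ρN ≠ 0 := by rw [hN.root_out]; omega
    obtain ⟨e, _⟩ := MGraph.nonempty_of_deg_ne_zero (P := fun e => N.tail e = ρN) h
    exact ⟨e⟩
  obtain ⟨f0⟩ := hFne
  -- slot functions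
  have hslotAll : ∀ y : V, ∃ (dA dB : V) (gA gB : F), (y ∉ lvT ∧ t y = Event.spec) →
      (T.Adj y dA ∧ T.Adj y dB ∧ dA ≠ dB ∧
       N.tail gA = N.tpt (μ y) ∧ N.tail gB = N.tpt (μ y) ∧ gA ≠ gB ∧
       ExtOK N gA (μ dA) ∧ ExtOK N gB (μ dB)) := by
    intro y
    by_cases h : y ∉ lvT ∧ t y = Event.spec
    · obtain ⟨dA, dB, gA, gB, hh⟩ := lemA hT hμ y h.1 h.2
      exact ⟨dA, dB, gA, gB, fun _ => hh⟩
    · exact ⟨y, y, f0, f0, fun hc => absurd hc h⟩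
  choose d1 d2 g1 g2 hslotF using hslotAll
  have hslot : ∀ y, y ∉ lvT → t y = Event.spec →
      T.Adj y (d1 y) ∧ T.Adj y (d2 y) ∧ d1 y ≠ d2 y ∧
      N.tail (g1 y) = N.tpt (μ y) ∧ N.tail (g2 y) = N.tpt (μ y) ∧ g1 y ≠ g2 y ∧
      ExtOK N (g1 y) (μ (d1 y)) ∧ ExtOK N (g2 y) (μ (d2 y)) :=
    fun y h1 h2 => hslotF y ⟨h1, h2⟩
  -- parent function
  have hparE : ∀ x : V, ∃ y : V, x ≠ ρT → (T.Adj y x ∧ ∀ z, T.Adj z x → z = y) := by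
    intro x
    by_cases h : x = ρT
    · exact ⟨x, fun hc => absurd h hc⟩
    · obtain ⟨y, hy⟩ := T_parent hT h
      exact ⟨y, fun _ => hy⟩
  choose par hpar using hparE
  -- well-foundedness of the parent relation
  have hwfT : WellFounded (fun a b : V => T.Adj a b) := by
    have h0 : WellFounded (fun a b : V => Relation.TransGen T.Adj a b) := by
      have h1 : IsTrans V (fun a b : V => Relation.TransGen T.Adj a b) :=
        ⟨fun _ _ _ p q => p.trans q⟩
      have h2 : IsIrrefl V (fun a b : V => Relation.TransGen T.Adj a b) :=
        ⟨fun a h => hacT a h⟩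
      exact Finite.wellFounded_of_trans_of_irrefl _
    exact Subrelation.wf (fun {a b} h => Relation.TransGen.single h) h0
  -- the reconciliation map
  let κ : V → RootPath N ρN ⊕ RootPathArc N ρN := WellFounded.fix hwfT
    (fun x IH =>
      if hx : x = ρT then Classical.choose (anch_exists hacN hN (μ ρT))
      else if hA : Anch N ρN (μ (par x)) (IH (par x) (hpar x hx).1) then
        Classical.choose (step_lemma hacN hT hμ d1 d2 g1 g2 hslot (par x) x
          (hpar x hx).1 (IH (par x) (hpar x hx).1) hA)
      else Sum.inl (rootRP N ρN))
  have hκeq : ∀ x, κ x =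
      if hx : x = ρT then Classical.choose (anch_exists hacN hN (μ ρT))
      else if hA : Anch N ρN (μ (par x)) (κ (par x)) then
        Classical.choose (step_lemma hacN hT hμ d1 d2 g1 g2 hslot (par x) x
          (hpar x hx).1 (κ (par x)) hA)
      else Sum.inl (rootRP N ρN) :=
    fun x => WellFounded.fix_eq hwfT _ x
  -- the anchoring invariant
  have hanch : ∀ x, Anch N ρN (μ x) (κ x) := by
    intro x
    induction x using WellFounded.induction hwfT with
    | _ x ih =>
      rw [hκeq x]
      by_cases hx : x = ρT
      · rw [dif_pos hx]
        have := Classical.choose_spec (anch_exists (ρN := ρN) hacN hN (μ ρT))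
        rw [hx]
        exact this
      · rw [dif_neg hx]
        have hAn : Anch N ρN (μ (par x)) (κ (par x)) := ih (par x) (hpar x hx).1
        rw [dif_pos hAn]
        exact (Classical.choose_spec (step_lemma hacN hT hμ d1 d2 g1 g2 hslot (par x) x
          (hpar x hx).1 (κ (par x)) hAn)).1
  -- the step postcondition
  have hPostAll : ∀ x, x ≠ ρT →
      Post lvT t μ d1 d2 g1 g2 (par x) x (κ (par x)) (κ x) := by
    intro x hx
    have hAn : Anch N ρN (μ (par x)) (κ (par x)) := hanch (par x)
    rw [hκeq x, dif_neg hx, dif_pos hAn]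
    exact Classical.choose_spec (step_lemma hacN hT hμ d1 d2 g1 g2 hslot (par x) x
      (hpar x hx).1 (κ (par x)) hAn)
  -- per-edge order relation
  have hstep : ∀ u v, T.Adj u v →
      ((unfoldGraph N ρN).slt (κ v) (κ u) ∨
        (BothD lvT t v u ∧ (unfoldGraph N ρN).sle (κ v) (κ u))) := by
    intro u v hadj
    have hvne : v ≠ ρT := T_child_ne_root hT hadj
    have hu : u = par v := (hpar v hvne).2 u hadj
    have hPost := hPostAll v hvne
    rw [← hu] at hPost
    by_cases hb : BothD lvT t v u
    · exact Or.inr ⟨hb, hPost.2.1⟩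
    · exact Or.inl (hPost.2.2.1 hb)
  -- global order relation
  have hQrel : ∀ x y, Relation.TransGen T.Adj y x →
      ((unfoldGraph N ρN).slt (κ x) (κ y) ∨
        (BothD lvT t x y ∧ (unfoldGraph N ρN).sle (κ x) (κ y))) := by
    intro x y h
    induction h with
    | single hadj => exact hstep _ _ hadj
    | tail hyb hadj ih =>
      rcases hstep _ _ hadj with h1 | ⟨hb1, h1⟩
      · rcases ih with h2 | ⟨hb2, h2⟩
        · exact Or.inl (uslt_trans h1 h2)
        · exact Or.inl (uslt_of_slt_sle h1 h2)
      · rcases ih with h2 | ⟨hb2, h2⟩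
        · exact Or.inl (uslt_of_sle_slt h1 h2)
        · exact Or.inr ⟨⟨hb1.1, hb2.2.1, hb1.2.2.1, hb2.2.2.2⟩, usle_trans h1 h2⟩
  refine ⟨κ, ?_, ?_, ?_, ?_, ?_, ?_⟩
  · -- M0
    intro x d hκx hd
    have hd2 : (unfoldGraph N ρN).outDeg d = 1 := hd.2
    cases hm : μ x with
    | inr e =>
      obtain ⟨a, ha, _⟩ := (hanch x).2 e hm
      rw [hκx] at ha
      cases ha
    | inl w =>
      obtain ⟨P, hP, hPl⟩ := (hanch x).1 w hm
      rw [hκx] at hP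
      injection hP with hP
      subst hP
      by_cases hlv : x ∈ lvT
      · -- leaf: no outgoing arcs
        have hwsp : w = sp (σ x) := by
          have := hμ.R1 x hlv
          rw [hm] at this
          injection this
        have hleafN : N.outDeg (sp (σ x)) = 0 := ((hN.leaf_iff _).mp (hsp.mem (σ x))).1
        have hempty : IsEmpty {a : RootPathArc N ρN // (unfoldGraph N ρN).tail a = d} := by
          constructor
          rintro ⟨a, ha⟩
          have hval : a.1.1 = d.1 := congrArg Subtype.val (unfold_tail a ▸ ha : a.tailRP = d)
          have htl : N.tail a.1.2 = w := by
            have h2 := a.2.2.1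
            rw [hval, hPl] at h2
            injection h2 with h2
            exact h2.symm
          refine MGraph.deg_ne_zero_of_mem (P := fun e => N.tail e = sp (σ x)) a.1.2
            (by show N.tail a.1.2 = sp (σ x); rw [htl, hwsp]) ?_
          exact hleafN
        rw [show (unfoldGraph N ρN).outDeg d =
          Nat.card {a : RootPathArc N ρN // (unfoldGraph N ρN).tail a = d} from rfl,
          Nat.card_of_isEmpty] at hd2
        omega
      · cases ht : t x with
        | dupl =>
          obtain ⟨e, he⟩ := hμ.R2ii x hlv ht
          rw [hm] at he
          cases he
        | spec =>
          obtain ⟨_, _, _, hg1t, hg2t, hgne, _, _⟩ := hslot x hlv ht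
          have htpt : N.tpt (μ x) = w := by rw [hm]; rfl
          have h1 : d.1.getLast? = some (N.tail (g1 x)) := by rw [hg1t, htpt]; exact hPl
          have h2 : d.1.getLast? = some (N.tail (g2 x)) := by rw [hg2t, htpt]; exact hPl
          have hA12 : mkArc hacN d (g1 x) h1 ≠ mkArc hacN d (g2 x) h2 := by
            intro h
            exact hgne (congrArg (fun a : RootPathArc N ρN => a.1.2) h)
          exact MGraph.deg_ne_one_of_two (P := fun a : RootPathArc N ρN =>
              (unfoldGraph N ρN).tail a = d)
            (mkArc hacN d (g1 x) h1) (mkArc hacN d (g2 x) h2)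
            (RootPath.ext' rfl) (RootPath.ext' rfl) hA12 hd2
  · -- M1
    intro x hx
    have hm := hμ.R1 x hx
    obtain ⟨P, hκx, hPl⟩ := (hanch x).1 _ hm
    exact ⟨P, hκx, ⟨sp (σ x), hsp.mem (σ x), hPl⟩, hPl⟩
  · -- M2i
    intro x hx htx
    obtain ⟨w, hμx, -⟩ := hμ.R2i x hx htx
    obtain ⟨P, hκx, hPl⟩ := (hanch x).1 w hμx
    obtain ⟨hD1, hD2, hDne, hg1t, hg2t, hgne, hok1, hok2⟩ := hslot x hx htx
    have htpt : N.tpt (μ x) = w := by rw [hμx]; rfl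
    have h1 : P.1.getLast? = some (N.tail (g1 x)) := by rw [hg1t, htpt]; exact hPl
    have h2 : P.1.getLast? = some (N.tail (g2 x)) := by rw [hg2t, htpt]; exact hPl
    set A1 := mkArc hacN P (g1 x) h1 with hA1def
    set A2 := mkArc hacN P (g2 x) h2 with hA2def
    have hslotP : ∀ (c : V) (g : F), T.Adj x c → c = d1 x ∨ c = d2 x →
        (∀ P' : RootPath N ρN, κ x = Sum.inl P' →
          ((c = d1 x → (P'.1 ++ [N.head (g1 x)]) <+: hptL N ρN (κ c)) ∧
           (c = d2 x → (P'.1 ++ [N.head (g2 x)]) <+: hptL N ρN (κ c)))) := by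
      intro c g hadj _ P' hP'
      have hcne : c ≠ ρT := T_child_ne_root hT hadj
      have hxc : x = par c := (hpar c hcne).2 x hadj
      have hPost := hPostAll c hcne
      rw [← hxc] at hPost
      exact ⟨fun hc => hPost.2.2.2.1 P' hP' hc, fun hc => hPost.2.2.2.2 P' hP' hc⟩
    have hr1 : (unfoldGraph N ρN).Reach ((unfoldGraph N ρN).head A1)
        ((unfoldGraph N ρN).hpt (κ (d1 x))) := by
      have := ((hslotP (d1 x) (g1 x) hD1 (Or.inl rfl) P hκx).1) rfl
      exact unfold_prefix_reach _ _ this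
    have hr2 : (unfoldGraph N ρN).Reach ((unfoldGraph N ρN).head A2)
        ((unfoldGraph N ρN).hpt (κ (d2 x))) := by
      have := ((hslotP (d2 x) (g2 x) hD2 (Or.inr rfl) P hκx).2) rfl
      exact unfold_prefix_reach _ _ this
    have hnosle : ∀ (B C : RootPathArc N ρN), B.1.1 = P.1 → C.1.1 = P.1 → B ≠ C →
        ¬ (unfoldGraph N ρN).sle (Sum.inr B) (Sum.inr C) := by
      intro B C hB hC hne h
      rcases h with heq | hslt
      · exact hne (by injection heq)
      · have hpre := unfold_reach_prefix hslt.2.1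
        have hlen : (C.1.1 ++ [N.head C.1.2]).length ≤ B.1.1.length := hpre.length_le
        rw [hB, hC] at hlen
        simp at hlen
    have hA12 : A1 ≠ A2 := by
      intro h
      exact hgne (congrArg (fun a : RootPathArc N ρN => a.1.2) h)
    refine ⟨P, hκx, ?_, d1 x, d2 x, hD1, hD2, hDne, A1, A2,
      RootPath.ext' rfl, RootPath.ext' rfl, hr1, hr2,
      hnosle A1 A2 rfl rfl hA12, hnosle A2 A1 rfl rfl hA12.symm⟩
    · -- not a leaf of the unfolding
      rintro ⟨l, hl, hll⟩
      have hlw : l = w := by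
        rw [hPl] at hll
        injection hll with h
        exact h.symm
      subst hlw
      have hleafN : N.outDeg l = 0 := ((hN.leaf_iff _).mp hl).1
      exact MGraph.deg_ne_zero_of_mem (P := fun e => N.tail e = l) (g1 x)
        (by show N.tail (g1 x) = l; rw [hg1t, htpt]) hleafN
  · -- M2ii
    intro x hx htx
    obtain ⟨e, hμx⟩ := hμ.R2ii x hx htx
    obtain ⟨a, hκx, _⟩ := (hanch x).2 e hμx
    exact ⟨a, hκx⟩
  · -- M3d
    intro x y hvlt h2 h3 h4 h5
    have htg : Relation.TransGen T.Adj y x :=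
      T.toTransGen hvlt.1 (fun h => hvlt.2 h.symm)
    rcases hQrel x y htg with h | ⟨_, h⟩
    · exact Or.inr h
    · exact h
  · -- M3s
    intro x y hvlt hnall
    have htg : Relation.TransGen T.Adj y x :=
      T.toTransGen hvlt.1 (fun h => hvlt.2 h.symm)
    rcases hQrel x y htg with h | ⟨hb, _⟩
    · exact h
    · exact absurd ⟨hb.1, hb.2.1, hb.2.2.1, hb.2.2.2⟩ hnall

end ForwardFinal

/-- For an event-labeled gene tree `(T;t,σ)` and a multi-arc free
    network `N` on `𝕊`, `N` is a species network for `(T;t,σ)` (i.e. there is a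
    TreeNet-reconciliation map from `(T;t,σ)` to `N`) iff `(U*(N),χ*)` is a
    pseudo MUL-tree for `(T;t,σ)` (i.e. there is a MUL-reconciliation map from
    `(T;t,σ)` to `(U*(N),χ*)`). -/
theorem species_network_iff_unfolding_recon {V E W F S : Type}
    (T : MGraph V E) (lvT : Set V) (ρT : V) (t : V → Event) (σ : V → S)
    (hT : IsGeneTree T lvT ρT σ)
    (N : MGraph W F) (lvN : Set W) (ρN : W) (sp : S → W)
    (hN : IsNetwork N lvN ρN) (hmf : N.MultiArcFree)
    (hsp : IsLeafLabeling N lvN sp) :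
    (∃ μ : V → W ⊕ F, IsTreeNetRecon T lvT t σ N sp μ) ↔
      ∃ κ : V → RootPath N ρN ⊕ RootPathArc N ρN,
        IsMULRecon T lvT t σ (unfoldGraph N ρN) (unfoldLeaves N ρN lvN)
          (chiStar N ρN sp) κ := by
  constructor
  · rintro ⟨μ, hμ⟩
    exact forward_recon hT hN hsp hμ
  · rintro ⟨κ, hκ⟩
    exact ⟨_, backward_recon T lvT t σ lvN sp hN.acyclic hmf κ hκ⟩

end Phylo
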